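/- For the renormalized quantized filter: for all γ, γ' ∈ S^N, y, y' ∈ Y, with Y ∼ ν, E[|Φ_N(Y,γ,y) − Φ_N(Y,γ',y')|] ≤ 2δ(1 + 2 r̄ δ)(r̄ + L_r)[√N |γ − γ'| + |y − y'|], provided ε_N ≤ 1/(2δL_r), where |·| is the Euclidean norm on ℝ^N. -/

import Mathlib

open MeasureTheory Set
noncomputable section

abbrev Em (m : ℕ) := EuclideanSpace ℝ (Fin m)

/-- `r(u,v,γ,y) = Σ_j γ_j r(u,v,x_N^j,y)` for a probability vector `γ` on the grid `xs`. -/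
noncomputable def rGam {m n N : ℕ} (r : Em m → Em n → Em m → Em n → ℝ)
    (xs : Fin N → Em m) (u : Em m) (v : Em n) (γ : EuclideanSpace ℝ (Fin N)) (y : Em n) : ℝ :=
  ∑ j, γ j * r u v (xs j) y

/-- `r(λ_N,v,γ,y) = Σ_i w_i r(x_N^i,v,γ,y)` with `w` the weights of `λ_N`. -/
noncomputable def rLamN {m n N : ℕ} (r : Em m → Em n → Em m → Em n → ℝ)
    (xs : Fin N → Em m) (w : Fin N → ℝ) (v : Em n)
    (γ : EuclideanSpace ℝ (Fin N)) (y : Em n) : ℝ :=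
  ∑ i, w i * rGam r xs (xs i) v γ y

/-- Quantized filter `Φ_N(v,γ,y) ∈ S^N`, with `j`-th component
`λ_N(x_N^j) r(x_N^j,v,γ,y)/r(λ_N,v,γ,y)`. -/
noncomputable def PhiNs {m n N : ℕ} (r : Em m → Em n → Em m → Em n → ℝ)
    (xs : Fin N → Em m) (w : Fin N → ℝ) (v : Em n)
    (γ : EuclideanSpace ℝ (Fin N)) (y : Em n) : EuclideanSpace ℝ (Fin N) :=
  WithLp.toLp 2 (fun j => w j * rGam r xs (xs j) v γ y / rLamN r xs w v γ y)

/-- `S_N g(γ,y) = E[g(Φ_N(Y,γ,y),Y) r(λ_N,Y,γ,y)/r(λ_N,ν,γ,y)]`, `Y ∼ ν`. -/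
noncomputable def SNs {m n N : ℕ} (r : Em m → Em n → Em m → Em n → ℝ)
    (xs : Fin N → Em m) (w : Fin N → ℝ) (nu : Measure (Em n))
    (g : EuclideanSpace ℝ (Fin N) → Em n → ℝ)
    (γ : EuclideanSpace ℝ (Fin N)) (y : Em n) : ℝ :=
  ∫ v, g (PhiNs r xs w v γ y) v *
    (rLamN r xs w v γ y / ∫ v', rLamN r xs w v' γ y ∂nu) ∂nu

/-- membership in the `N`-simplex -/
def InSimplex {N : ℕ} (γ : EuclideanSpace ℝ (Fin N)) : Prop :=
  (∀ j, 0 ≤ γ j) ∧ (∑ j, γ j) = 1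

/-- auxiliary: `x / R ≤ x * c` when `c⁻¹ ≤ R`. -/
lemma aux_div (x c R : ℝ) (hx : 0 ≤ x) (hc : 0 < c) (hR : c⁻¹ ≤ R) : x / R ≤ x * c := by
  have hR0 : 0 < R := lt_of_lt_of_le (by positivity) hR
  rw [div_le_iff₀ hR0]
  have h1 : 1 ≤ c * R := by
    rw [← mul_inv_cancel₀ hc.ne']
    exact mul_le_mul_of_nonneg_left hR hc.le
  nlinarith [mul_le_mul_of_nonneg_left h1 hx]

lemma aux_norm_le_sum {N : ℕ} (x : EuclideanSpace ℝ (Fin N)) : ‖x‖ ≤ ∑ j, |x j| := by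
  rw [EuclideanSpace.norm_eq]
  have h1 : ∑ j, ‖x j‖ ^ 2 ≤ (∑ j, |x j|) ^ 2 := by
    simpa [Real.norm_eq_abs, sq_abs] using
      Finset.sum_sq_le_sq_sum_of_nonneg (f := fun j => |x j|)
        (fun i _ => abs_nonneg _)
  calc Real.sqrt (∑ j, ‖x j‖ ^ 2) ≤ Real.sqrt ((∑ j, |x j|) ^ 2) := Real.sqrt_le_sqrt h1
    _ = ∑ j, |x j| := Real.sqrt_sq (Finset.sum_nonneg fun i _ => abs_nonneg _)

lemma aux_sum_le_sqrt {N : ℕ} (x : EuclideanSpace ℝ (Fin N)) :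
    ∑ j, |x j| ≤ Real.sqrt N * ‖x‖ := by
  have h1 : (∑ j, |x j|) ^ 2 ≤ N * ∑ j, |x j| ^ 2 := by
    simpa using sq_sum_le_card_mul_sum_sq (s := Finset.univ) (f := fun j => |x j|)
  have h2 : ∑ j, |x j| ^ 2 = ‖x‖ ^ 2 := by
    rw [EuclideanSpace.norm_eq, Real.sq_sqrt (Finset.sum_nonneg fun i _ => by positivity)]
    simp [Real.norm_eq_abs]
  calc ∑ j, |x j| = Real.sqrt ((∑ j, |x j|) ^ 2) :=
        (Real.sqrt_sq (Finset.sum_nonneg fun i _ => abs_nonneg _)).symm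
    _ ≤ Real.sqrt (N * ‖x‖ ^ 2) := Real.sqrt_le_sqrt (by rw [← h2]; exact h1)
    _ = Real.sqrt N * ‖x‖ := by
        rw [Real.sqrt_mul (Nat.cast_nonneg N), Real.sqrt_sq (norm_nonneg x)]

theorem stmt_10 {m n N : ℕ} (Lr δ rbar εN : ℝ) (hLr : 0 < Lr) (hδ : 0 < δ)
    (r : Em m → Em n → Em m → Em n → ℝ)
    (lam : Measure (Em m)) (nu : Measure (Em n))
    [IsProbabilityMeasure lam] [IsProbabilityMeasure nu]
    (xs : Fin N → Em m) (w : Fin N → ℝ) (hw : ∀ i, 0 ≤ w i) (hws : (∑ i, w i) = 1)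
    (hr_meas : Measurable fun p : (Em m × Em n) × Em m × Em n => r p.1.1 p.1.2 p.2.1 p.2.2)
    (hr_nonneg : ∀ u v x y, 0 ≤ r u v x y)
    (hr_bdd : ∀ u v x y, r u v x y ≤ rbar)
    (hr_lip : ∀ u u' v x x' y y',
      |r u v x y - r u' v x' y'| ≤ Lr * (dist u u' + dist x x' + dist y y'))
    (hlow : ∀ (v : Em n) (x : Em m) (y : Em n), δ⁻¹ ≤ ∫ u, r u v x y ∂lam)
    (hW : ∀ f : Em m → ℝ, (∀ a b, |f a - f b| ≤ dist a b) →
      |(∫ u, f u ∂lam) - ∑ i, w i * f (xs i)| ≤ εN)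
    (hεN : εN ≤ 1 / (2 * δ * Lr)) :
    ∀ (γ γ' : EuclideanSpace ℝ (Fin N)) (y y' : Em n), InSimplex γ → InSimplex γ' →
      (∫ v, ‖PhiNs r xs w v γ y - PhiNs r xs w v γ' y'‖ ∂nu) ≤
        2 * δ * (1 + 2 * rbar * δ) * (rbar + Lr) *
          (Real.sqrt N * ‖γ - γ'‖ + dist y y') := by
  intro γ γ' y y' hγ hγ'
  obtain ⟨hγ0, hγ1⟩ := hγ
  obtain ⟨hγ'0, hγ'1⟩ := hγ'
  have hrbar0 : 0 ≤ rbar := le_trans (hr_nonneg 0 0 0 0) (hr_bdd 0 0 0 0)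
  set S : ℝ := ∑ k, |γ k - γ' k| with hSdef
  have hS0 : 0 ≤ S := Finset.sum_nonneg fun i _ => abs_nonneg _
  set dy : ℝ := dist y y' with hdydef
  have hdy0 : 0 ≤ dy := dist_nonneg
  set D : ℝ := rbar * S + Lr * dy with hDdef
  have hD0 : 0 ≤ D := by positivity
  -- bounds for rGam on simplex vectors
  have gam_nonneg : ∀ (u : Em m) (v : Em n) (β : EuclideanSpace ℝ (Fin N)) (z : Em n),
      (∀ k, 0 ≤ β k) → 0 ≤ rGam r xs u v β z := fun u v β z hβ =>
    Finset.sum_nonneg fun k _ => mul_nonneg (hβ k) (hr_nonneg _ _ _ _)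
  have gam_bdd : ∀ (u : Em m) (v : Em n) (β : EuclideanSpace ℝ (Fin N)) (z : Em n),
      (∀ k, 0 ≤ β k) → (∑ k, β k) = 1 → rGam r xs u v β z ≤ rbar := by
    intro u v β z hβ0 hβ1
    calc rGam r xs u v β z ≤ ∑ k, β k * rbar :=
          Finset.sum_le_sum fun k _ => mul_le_mul_of_nonneg_left (hr_bdd _ _ _ _) (hβ0 k)
      _ = rbar := by rw [← Finset.sum_mul, hβ1, one_mul]
  -- lower bound for rLamN
  have lam_low : ∀ (v : Em n) (β : EuclideanSpace ℝ (Fin N)) (z : Em n),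
      (∀ k, 0 ≤ β k) → (∑ k, β k) = 1 → (2 * δ)⁻¹ ≤ rLamN r xs w v β z := by
    intro v β z hβ0 hβ1
    have hint : ∀ (x : Em m) (yy : Em n), Integrable (fun u => r u v x yy) lam := by
      intro x yy
      have hm : Measurable (fun u : Em m => r u v x yy) := by
        have hmap : Measurable fun u : Em m => ((u, v), (x, yy)) :=
          (measurable_id.prodMk measurable_const).prodMk measurable_const
        exact hr_meas.comp hmap
      refine (integrable_const rbar).mono' hm.aestronglyMeasurable ?_
      filter_upwards with u
      rw [Real.norm_eq_abs, abs_of_nonneg (hr_nonneg _ _ _ _)]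
      exact hr_bdd _ _ _ _
    have hIg : δ⁻¹ ≤ ∫ u, rGam r xs u v β z ∂lam := by
      have heq : ∫ u, rGam r xs u v β z ∂lam = ∑ k, β k * ∫ u, r u v (xs k) z ∂lam := by
        simp only [rGam]
        rw [integral_finset_sum _ (fun k _ => ((hint (xs k) z).const_mul (β k)))]
        exact Finset.sum_congr rfl fun k _ => integral_const_mul _ _
      rw [heq]
      calc δ⁻¹ = ∑ k, β k * δ⁻¹ := by rw [← Finset.sum_mul, hβ1, one_mul]
        _ ≤ ∑ k, β k * ∫ u, r u v (xs k) z ∂lam :=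
            Finset.sum_le_sum fun k _ => mul_le_mul_of_nonneg_left (hlow v (xs k) z) (hβ0 k)
    set f : Em m → ℝ := fun u => Lr⁻¹ * rGam r xs u v β z with hfdef
    have hflip : ∀ a b, |f a - f b| ≤ dist a b := by
      intro a b
      have h1 : f a - f b = Lr⁻¹ * ∑ k, β k * (r a v (xs k) z - r b v (xs k) z) := by
        simp only [hfdef, rGam]
        rw [← mul_sub, ← Finset.sum_sub_distrib]
        congr 1
        exact Finset.sum_congr rfl fun k _ => (mul_sub _ _ _).symm
      rw [h1, abs_mul, abs_inv, abs_of_pos hLr]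
      have h2 : |∑ k, β k * (r a v (xs k) z - r b v (xs k) z)| ≤ Lr * dist a b := by
        calc |∑ k, β k * (r a v (xs k) z - r b v (xs k) z)|
            ≤ ∑ k, |β k * (r a v (xs k) z - r b v (xs k) z)| :=
              Finset.abs_sum_le_sum_abs _ _
          _ ≤ ∑ k, β k * (Lr * dist a b) := by
              refine Finset.sum_le_sum fun k _ => ?_
              rw [abs_mul, abs_of_nonneg (hβ0 k)]
              refine mul_le_mul_of_nonneg_left ?_ (hβ0 k)
              have := hr_lip a b v (xs k) (xs k) z z
              simpa [dist_self] using this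
          _ = Lr * dist a b := by rw [← Finset.sum_mul, hβ1, one_mul]
      calc Lr⁻¹ * |∑ k, β k * (r a v (xs k) z - r b v (xs k) z)|
          ≤ Lr⁻¹ * (Lr * dist a b) := mul_le_mul_of_nonneg_left h2 (by positivity)
        _ = dist a b := by field_simp
    have hq := hW f hflip
    have hIf : ∫ u, f u ∂lam = Lr⁻¹ * ∫ u, rGam r xs u v β z ∂lam := by
      simp only [hfdef]
      exact integral_const_mul _ _
    have hSf : ∑ i, w i * f (xs i) = Lr⁻¹ * rLamN r xs w v β z := by
      simp only [hfdef, rLamN, Finset.mul_sum]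
      exact Finset.sum_congr rfl fun i _ => by ring
    rw [hIf, hSf, ← mul_sub, abs_mul, abs_inv, abs_of_pos hLr] at hq
    have h3 : |(∫ u, rGam r xs u v β z ∂lam) - rLamN r xs w v β z| ≤ Lr * εN := by
      have := (inv_mul_le_iff₀ hLr).mp hq
      linarith
    have h4 : Lr * εN ≤ (2 * δ)⁻¹ := by
      calc Lr * εN ≤ Lr * (1 / (2 * δ * Lr)) :=
            mul_le_mul_of_nonneg_left hεN hLr.le
        _ = (2 * δ)⁻¹ := by field_simp
    have habs := abs_le.mp (h3.trans h4)
    have harith : δ⁻¹ - (2 * δ)⁻¹ = (2 * δ)⁻¹ := by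
      field_simp
      ring
    linarith [habs.2, hIg]
  -- Lipschitz estimates
  have gam_lip : ∀ (u : Em m) (v : Em n),
      |rGam r xs u v γ y - rGam r xs u v γ' y'| ≤ D := by
    intro u v
    have h1 : rGam r xs u v γ y - rGam r xs u v γ' y' =
        ∑ k, ((γ k - γ' k) * r u v (xs k) y + γ' k * (r u v (xs k) y - r u v (xs k) y')) := by
      simp only [rGam]
      rw [← Finset.sum_sub_distrib]
      exact Finset.sum_congr rfl fun k _ => by ring
    rw [h1]
    calc |∑ k, ((γ k - γ' k) * r u v (xs k) y + γ' k * (r u v (xs k) y - r u v (xs k) y'))|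
        ≤ ∑ k, |(γ k - γ' k) * r u v (xs k) y + γ' k * (r u v (xs k) y - r u v (xs k) y')| :=
          Finset.abs_sum_le_sum_abs _ _
      _ ≤ ∑ k, (|γ k - γ' k| * rbar + γ' k * (Lr * dy)) := by
          refine Finset.sum_le_sum fun k _ => ?_
          refine (abs_add_le _ _).trans (add_le_add ?_ ?_)
          · rw [abs_mul, abs_of_nonneg (hr_nonneg _ _ _ _)]
            exact mul_le_mul_of_nonneg_left (hr_bdd _ _ _ _) (abs_nonneg _)
          · rw [abs_mul, abs_of_nonneg (hγ'0 k)]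
            refine mul_le_mul_of_nonneg_left ?_ (hγ'0 k)
            have := hr_lip u u v (xs k) (xs k) y y'
            simpa [dist_self, hdydef] using this
      _ = D := by
          rw [Finset.sum_add_distrib, ← Finset.sum_mul, ← Finset.sum_mul, hγ'1, one_mul,
            hDdef, hSdef]
          ring
  have lam_lip : ∀ v : Em n, |rLamN r xs w v γ y - rLamN r xs w v γ' y'| ≤ D := by
    intro v
    have h1 : rLamN r xs w v γ y - rLamN r xs w v γ' y' =
        ∑ i, w i * (rGam r xs (xs i) v γ y - rGam r xs (xs i) v γ' y') := by
      simp only [rLamN]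
      rw [← Finset.sum_sub_distrib]
      exact Finset.sum_congr rfl fun i _ => (mul_sub _ _ _).symm
    rw [h1]
    calc |∑ i, w i * (rGam r xs (xs i) v γ y - rGam r xs (xs i) v γ' y')|
        ≤ ∑ i, |w i * (rGam r xs (xs i) v γ y - rGam r xs (xs i) v γ' y')| :=
          Finset.abs_sum_le_sum_abs _ _
      _ ≤ ∑ i, w i * D := by
          refine Finset.sum_le_sum fun i _ => ?_
          rw [abs_mul, abs_of_nonneg (hw i)]
          exact mul_le_mul_of_nonneg_left (gam_lip (xs i) v) (hw i)
      _ = D := by rw [← Finset.sum_mul, hws, one_mul]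
  -- pointwise bound
  set K : ℝ := 2 * δ * (1 + 2 * rbar * δ) with hKdef
  have hK0 : 0 ≤ K := by positivity
  have key : ∀ v : Em n,
      ‖PhiNs r xs w v γ y - PhiNs r xs w v γ' y'‖ ≤ K * D := by
    intro v
    set R : ℝ := rLamN r xs w v γ y with hRdef
    set R' : ℝ := rLamN r xs w v γ' y' with hR'def
    have hR : (2 * δ)⁻¹ ≤ R := lam_low v γ y hγ0 hγ1
    have hR' : (2 * δ)⁻¹ ≤ R' := lam_low v γ' y' hγ'0 hγ'1
    have hR0 : 0 < R := lt_of_lt_of_le (by positivity) hR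
    have hR'0 : 0 < R' := lt_of_lt_of_le (by positivity) hR'
    have comp : ∀ j, |PhiNs r xs w v γ y j - PhiNs r xs w v γ' y' j| ≤ w j * (K * D) := by
      intro j
      set a : ℝ := rGam r xs (xs j) v γ y with hadef
      set a' : ℝ := rGam r xs (xs j) v γ' y' with ha'def
      have ha'0 : 0 ≤ a' := gam_nonneg (xs j) v γ' y' hγ'0
      have ha'b : a' ≤ rbar := gam_bdd (xs j) v γ' y' hγ'0 hγ'1
      have hda : |a - a'| ≤ D := gam_lip (xs j) v
      have hdR : |R - R'| ≤ D := lam_lip v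
      have heq : PhiNs r xs w v γ y j - PhiNs r xs w v γ' y' j =
          w j * (a / R - a' / R') := by
        simp only [PhiNs, PiLp.toLp_apply, hadef, ha'def, hRdef, hR'def]
        ring
      rw [heq, abs_mul, abs_of_nonneg (hw j)]
      refine mul_le_mul_of_nonneg_left ?_ (hw j)
      have step1 : |a / R - a' / R| ≤ 2 * δ * D := by
        rw [div_sub_div_same, abs_div, abs_of_pos hR0]
        calc |a - a'| / R ≤ |a - a'| * (2 * δ) :=
              aux_div _ _ _ (abs_nonneg _) (by positivity) hR
          _ ≤ D * (2 * δ) := mul_le_mul_of_nonneg_right hda (by positivity)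
          _ = 2 * δ * D := by ring
      have step2 : |a' / R - a' / R'| ≤ 4 * δ ^ 2 * rbar * D := by
        have heq2 : a' / R - a' / R' = a' * (R' - R) / (R * R') := by
          field_simp
        rw [heq2, abs_div, abs_of_pos (mul_pos hR0 hR'0), abs_mul]
        have hnum : |a'| * |R' - R| ≤ rbar * D := by
          rw [abs_of_nonneg ha'0, abs_sub_comm]
          exact mul_le_mul ha'b hdR (abs_nonneg _) hrbar0
        have hc : ((2 * δ) * (2 * δ))⁻¹ ≤ R * R' := by
          rw [mul_inv]
          exact mul_le_mul hR hR' (by positivity) hR0.le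
        calc |a'| * |R' - R| / (R * R') ≤ (rbar * D) / (R * R') := by
              gcongr
          _ ≤ (rbar * D) * ((2 * δ) * (2 * δ)) :=
              aux_div _ _ _ (by positivity) (by positivity) hc
          _ = 4 * δ ^ 2 * rbar * D := by ring
      calc |a / R - a' / R'| ≤ |a / R - a' / R| + |a' / R - a' / R'| := by
            have := abs_sub_le (a / R) (a' / R) (a' / R')
            linarith
        _ ≤ 2 * δ * D + 4 * δ ^ 2 * rbar * D := add_le_add step1 step2
        _ = K * D := by rw [hKdef]; ring
    calc ‖PhiNs r xs w v γ y - PhiNs r xs w v γ' y'‖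
        ≤ ∑ j, |(PhiNs r xs w v γ y - PhiNs r xs w v γ' y') j| := aux_norm_le_sum _
      _ = ∑ j, |PhiNs r xs w v γ y j - PhiNs r xs w v γ' y' j| := by
          refine Finset.sum_congr rfl fun j _ => ?_
          rw [PiLp.sub_apply]
      _ ≤ ∑ j, w j * (K * D) := Finset.sum_le_sum fun j _ => comp j
      _ = K * D := by rw [← Finset.sum_mul, hws, one_mul]
  -- bound D by the final expression
  have hSb : S ≤ Real.sqrt N * ‖γ - γ'‖ := by
    have h := aux_sum_le_sqrt (γ - γ')
    have h2 : ∑ j, |(γ - γ') j| = S := by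
      rw [hSdef]
      exact Finset.sum_congr rfl fun j _ => by rw [PiLp.sub_apply]
    rwa [h2] at h
  have hT0 : 0 ≤ Real.sqrt N * ‖γ - γ'‖ := by positivity
  have hDb : D ≤ (rbar + Lr) * (Real.sqrt N * ‖γ - γ'‖ + dy) := by
    rw [hDdef]
    nlinarith [mul_le_mul_of_nonneg_left hSb hrbar0, hLr.le, hdy0, hT0]
  set C : ℝ := 2 * δ * (1 + 2 * rbar * δ) * (rbar + Lr) *
      (Real.sqrt N * ‖γ - γ'‖ + dist y y') with hCdef
  have key' : ∀ v : Em n, ‖PhiNs r xs w v γ y - PhiNs r xs w v γ' y'‖ ≤ C := by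
    intro v
    refine (key v).trans ?_
    rw [hCdef, hKdef]
    calc 2 * δ * (1 + 2 * rbar * δ) * D
        ≤ 2 * δ * (1 + 2 * rbar * δ) * ((rbar + Lr) * (Real.sqrt N * ‖γ - γ'‖ + dy)) :=
          mul_le_mul_of_nonneg_left hDb (by positivity)
      _ = 2 * δ * (1 + 2 * rbar * δ) * (rbar + Lr) * (Real.sqrt N * ‖γ - γ'‖ + dist y y') := by
          rw [hdydef]; ring
  calc (∫ v, ‖PhiNs r xs w v γ y - PhiNs r xs w v γ' y'‖ ∂nu)
      ≤ ‖∫ v, ‖PhiNs r xs w v γ y - PhiNs r xs w v γ' y'‖ ∂nu‖ := le_abs_self _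
    _ ≤ C * (nu univ).toReal := by
        refine norm_integral_le_of_norm_le_const (ae_of_all _ fun v => ?_)
        rw [Real.norm_eq_abs, abs_of_nonneg (norm_nonneg _)]
        exact key' v
    _ = C := by simp
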